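/- arXiv:1604.02189 — 3 statements merged into one kernel-verified Lean document; each statement's English description precedes it below -/
import Mathlib

section
/- Let ρ be a positive semidefinite operator on ℂ^{d} ⊗ ℂ^{d} and 0 < δ < 1/8. Suppose N_δ is a δ-net of the unit sphere of ℂ^d in norm. Define M(ρ) = sup over unit vectors x,y of ⟨x⊗y|ρ|x⊗y⟩ and M_δ(ρ) = max over x,y ∈ N_δ of ⟨x⊗y|ρ|x⊗y⟩. Then M_δ(ρ) ≥ (1 − 4δ) M(ρ). -/
open Matrix
open scoped ComplexOrder

/-- Net approximation of the maximal product overlap: if N_δ is a δ-net of unit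
vectors of ℂ^d (0 < δ < 1/8) and ρ ⪰ 0, then
max over net pairs of ⟨x⊗y|ρ|x⊗y⟩ is at least (1 − 4δ) times the supremum
over all unit vector pairs. -/
theorem net_overlap_ge {d : ℕ} (hd : 0 < d)
    (ρ : Matrix (Fin d × Fin d) (Fin d × Fin d) ℂ) (hρ : ρ.PosSemidef)
    (δ : ℝ) (hδ0 : 0 < δ) (hδ : δ < 1 / 8)
    (N : Finset (EuclideanSpace ℂ (Fin d)))
    (hNunit : ∀ x ∈ N, ‖x‖ = 1)
    (hNnet : ∀ x : EuclideanSpace ℂ (Fin d), ‖x‖ = 1 → ∃ y ∈ N, ‖x - y‖ ≤ δ) :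
    sSup { r | ∃ x ∈ N, ∃ y ∈ N,
        r = ((star (fun p : Fin d × Fin d => x p.1 * y p.2)) ⬝ᵥ
              (ρ *ᵥ (fun p : Fin d × Fin d => x p.1 * y p.2))).re } ≥
      (1 - 4 * δ) *
        sSup { r | ∃ x y : EuclideanSpace ℂ (Fin d), ‖x‖ = 1 ∧ ‖y‖ = 1 ∧
            r = ((star (fun p : Fin d × Fin d => x p.1 * y p.2)) ⬝ᵥ
                  (ρ *ᵥ (fun p : Fin d × Fin d => x p.1 * y p.2))).re } := by
  classical
  obtain ⟨B, hB⟩ : ∃ B : Matrix (Fin d × Fin d) (Fin d × Fin d) ℂ, ρ = Bᴴ * B := by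
    open scoped MatrixOrder in
    obtain ⟨B, hB⟩ := CStarAlgebra.nonneg_iff_eq_star_mul_self.mp hρ.nonneg
    exact ⟨B, hB⟩
  set kv : EuclideanSpace ℂ (Fin d) → EuclideanSpace ℂ (Fin d) → (Fin d × Fin d → ℂ) :=
    fun x y => fun p : Fin d × Fin d => x p.1 * y p.2 with hkv
  set E := EuclideanSpace ℂ (Fin d × Fin d)
  set gL : E →L[ℂ] E := LinearMap.toContinuousLinearMap (Matrix.toEuclideanLin B) with hgL
  set F : EuclideanSpace ℂ (Fin d) → EuclideanSpace ℂ (Fin d) → E :=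
    fun x y => gL ((WithLp.equiv 2 _).symm (kv x y)) with hF
  -- key identity
  have key : ∀ x y : EuclideanSpace ℂ (Fin d),
      ((star (kv x y)) ⬝ᵥ (ρ *ᵥ (kv x y))).re = ‖F x y‖ ^ 2 := by
    intro x y
    have h1 : (star (kv x y)) ⬝ᵥ (ρ *ᵥ (kv x y)) = inner ℂ (F x y) (F x y) := by
      rw [EuclideanSpace.inner_eq_star_dotProduct]
      show star (kv x y) ⬝ᵥ ρ *ᵥ kv x y = (B *ᵥ kv x y) ⬝ᵥ star (B *ᵥ kv x y)
      rw [dotProduct_comm (B *ᵥ kv x y)]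
      rw [Matrix.star_mulVec, ← Matrix.dotProduct_mulVec, Matrix.mulVec_mulVec, ← hB]
    have h2 := @inner_self_eq_norm_sq ℂ _ _ _ _ (F x y)
    rw [h1]
    exact h2
  -- sets
  set S := { r : ℝ | ∃ x y : EuclideanSpace ℂ (Fin d), ‖x‖ = 1 ∧ ‖y‖ = 1 ∧
      r = ((star (kv x y)) ⬝ᵥ (ρ *ᵥ (kv x y))).re } with hS
  set T := { r : ℝ | ∃ x ∈ N, ∃ y ∈ N,
      r = ((star (kv x y)) ⬝ᵥ (ρ *ᵥ (kv x y))).re } with hT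
  -- norm of kv
  have hkvnorm : ∀ x y : EuclideanSpace ℂ (Fin d),
      ‖(WithLp.equiv 2 ((Fin d × Fin d) → ℂ)).symm (kv x y)‖ = ‖x‖ * ‖y‖ := by
    intro x y
    rw [EuclideanSpace.norm_eq, EuclideanSpace.norm_eq, EuclideanSpace.norm_eq,
      ← Real.sqrt_mul (by positivity)]
    congr 1
    have hpt : ∀ p : Fin d × Fin d,
        ‖((WithLp.equiv 2 ((Fin d × Fin d) → ℂ)).symm (kv x y)) p‖ ^ 2
          = ‖x p.1‖ ^ 2 * ‖y p.2‖ ^ 2 := by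
      intro p
      simp [hkv, norm_mul, mul_pow]
    rw [Finset.sum_congr rfl (fun p _ => hpt p), Fintype.sum_prod_type,
      Finset.sum_mul_sum]
  -- bddAbove of S
  have hSbdd : BddAbove S := by
    refine ⟨‖gL‖ ^ 2, fun r hr => ?_⟩
    obtain ⟨x, y, hx, hy, rfl⟩ := hr
    rw [key]
    have h2 : ‖F x y‖ ≤ ‖gL‖ := by
      calc ‖F x y‖ ≤ ‖gL‖ * ‖(WithLp.equiv 2 ((Fin d × Fin d) → ℂ)).symm (kv x y)‖ :=
            gL.le_opNorm _
        _ = ‖gL‖ := by rw [hkvnorm, hx, hy]; ring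
    exact pow_le_pow_left₀ (norm_nonneg _) h2 2
  have hTsubS : T ⊆ S := by
    rintro r ⟨x, hx, y, hy, rfl⟩
    exact ⟨x, y, hNunit x hx, hNunit y hy, rfl⟩
  have hTbdd : BddAbove T := hSbdd.mono hTsubS
  -- nonempty
  have he0 : ‖(EuclideanSpace.single ⟨0, hd⟩ (1 : ℂ) : EuclideanSpace ℂ (Fin d))‖ = 1 := by
    rw [EuclideanSpace.norm_single]; norm_num
  have hSne : S.Nonempty :=
    ⟨_, EuclideanSpace.single ⟨0, hd⟩ (1 : ℂ), EuclideanSpace.single ⟨0, hd⟩ (1 : ℂ),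
      he0, he0, rfl⟩
  set M := sSup S with hM
  set Mδ := sSup T with hMδ
  have hM0 : 0 ≤ M := by
    obtain ⟨r, hr⟩ := hSne
    obtain ⟨x, y, hx, hy, rfl⟩ := hr
    have := key x y
    refine le_trans ?_ (le_csSup hSbdd ⟨x, y, hx, hy, rfl⟩)
    rw [this]; positivity
  -- bound on ‖F x y‖ for unit vectors
  have hFle : ∀ x y : EuclideanSpace ℂ (Fin d), ‖x‖ = 1 → ‖y‖ = 1 →
      ‖F x y‖ ≤ Real.sqrt M := by
    intro x y hx hy
    rw [show Real.sqrt M = Real.sqrt M from rfl]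
    have hmem : ((star (kv x y)) ⬝ᵥ (ρ *ᵥ (kv x y))).re ≤ M :=
      le_csSup hSbdd ⟨x, y, hx, hy, rfl⟩
    rw [key] at hmem
    have := Real.sqrt_le_sqrt hmem
    rwa [Real.sqrt_sq (norm_nonneg _)] at this
  -- scaling
  have hFsmul : ∀ (c c' : ℂ) (x y : EuclideanSpace ℂ (Fin d)),
      F (c • x) (c' • y) = (c * c') • F x y := by
    intro c c' x y
    simp only [hF]
    have : kv (c • x) (c' • y) = (c * c') • kv x y := by
      funext p
      simp only [hkv, Pi.smul_apply, PiLp.smul_apply, smul_eq_mul]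
      ring
    rw [this]
    simp only [WithLp.equiv_symm_apply, WithLp.toLp_smul, _root_.map_smul]
  have hFle' : ∀ x y : EuclideanSpace ℂ (Fin d),
      ‖F x y‖ ≤ ‖x‖ * ‖y‖ * Real.sqrt M := by
    intro x y
    rcases eq_or_ne x 0 with rfl | hx0
    · have : kv (0 : EuclideanSpace ℂ (Fin d)) y = 0 := by
        funext p; simp [hkv]
      simp [hF, this]
    rcases eq_or_ne y 0 with rfl | hy0
    · have : kv x (0 : EuclideanSpace ℂ (Fin d)) = 0 := by
        funext p; simp [hkv]
      simp [hF, this]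
    have hxn : (0:ℝ) < ‖x‖ := norm_pos_iff.mpr hx0
    have hyn : (0:ℝ) < ‖y‖ := norm_pos_iff.mpr hy0
    have hx1 : ‖((‖x‖ : ℂ)⁻¹ • x : EuclideanSpace ℂ (Fin d))‖ = 1 := by
      rw [norm_smul]; simp [hxn.ne']
    have hy1 : ‖((‖y‖ : ℂ)⁻¹ • y : EuclideanSpace ℂ (Fin d))‖ = 1 := by
      rw [norm_smul]; simp [hyn.ne']
    have hxy : F x y = ((‖x‖ : ℂ) * (‖y‖ : ℂ)) • F ((‖x‖ : ℂ)⁻¹ • x) ((‖y‖ : ℂ)⁻¹ • y) := by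
      rw [hFsmul, smul_smul,
        show ((‖x‖ : ℂ) * (‖y‖ : ℂ)) * ((‖x‖ : ℂ)⁻¹ * (‖y‖ : ℂ)⁻¹) = 1 by
          field_simp, one_smul]
    rw [hxy, norm_smul]
    have := hFle _ _ hx1 hy1
    calc ‖(‖x‖ : ℂ) * (‖y‖ : ℂ)‖ * ‖F ((‖x‖ : ℂ)⁻¹ • x) ((‖y‖ : ℂ)⁻¹ • y)‖
        ≤ ‖(‖x‖ : ℂ) * (‖y‖ : ℂ)‖ * Real.sqrt M := by
          exact mul_le_mul_of_nonneg_left this (norm_nonneg _)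
      _ = ‖x‖ * ‖y‖ * Real.sqrt M := by simp [norm_mul]
  -- bilinearity (sub)
  have hFsub1 : ∀ x x' y : EuclideanSpace ℂ (Fin d), F x y - F x' y = F (x - x') y := by
    intro x x' y
    simp only [hF]
    have : kv (x - x') y = kv x y - kv x' y := by
      funext p
      simp only [hkv, PiLp.sub_apply, Pi.sub_apply]
      ring
    simp only [this, WithLp.equiv_symm_apply, WithLp.toLp_sub, map_sub]
  have hFsub2 : ∀ x y y' : EuclideanSpace ℂ (Fin d), F x y - F x y' = F x (y - y') := by
    intro x y y'
    simp only [hF]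
    have : kv x (y - y') = kv x y - kv x y' := by
      funext p
      simp only [hkv, PiLp.sub_apply, Pi.sub_apply]
      ring
    simp only [this, WithLp.equiv_symm_apply, WithLp.toLp_sub, map_sub]
  -- main step
  have hstep : ∀ x y : EuclideanSpace ℂ (Fin d), ‖x‖ = 1 → ‖y‖ = 1 →
      ((star (kv x y)) ⬝ᵥ (ρ *ᵥ (kv x y))).re ≤ Mδ + 4 * δ * M := by
    intro x y hx hy
    obtain ⟨x', hx'N, hx'⟩ := hNnet x hx
    obtain ⟨y', hy'N, hy'⟩ := hNnet y hy
    have hx'u : ‖x'‖ = 1 := hNunit x' hx'N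
    have hy'u : ‖y'‖ = 1 := hNunit y' hy'N
    set a := ‖F x y‖ with ha
    set b := ‖F x' y'‖ with hb
    have hdiff : a - b ≤ 2 * δ * Real.sqrt M := by
      have h1 : a - b ≤ ‖F x y - F x' y'‖ := by
        have := norm_sub_norm_le (F x y) (F x' y')
        linarith
      have h2 : F x y - F x' y' = F (x - x') y + F x' (y - y') := by
        have e1 := hFsub1 x x' y
        have e2 := hFsub2 x' y y'
        rw [← e1, ← e2]; abel
      have h3 : ‖F (x - x') y‖ ≤ δ * Real.sqrt M := by
        calc ‖F (x - x') y‖ ≤ ‖x - x'‖ * ‖y‖ * Real.sqrt M := hFle' _ _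
          _ ≤ δ * 1 * Real.sqrt M := by
              apply mul_le_mul_of_nonneg_right _ (Real.sqrt_nonneg _)
              rw [hy]
              exact mul_le_mul_of_nonneg_right hx' (by norm_num)
          _ = δ * Real.sqrt M := by ring
      have h4 : ‖F x' (y - y')‖ ≤ δ * Real.sqrt M := by
        calc ‖F x' (y - y')‖ ≤ ‖x'‖ * ‖y - y'‖ * Real.sqrt M := hFle' _ _
          _ ≤ 1 * δ * Real.sqrt M := by
              apply mul_le_mul_of_nonneg_right _ (Real.sqrt_nonneg _)
              rw [hx'u]
              exact mul_le_mul_of_nonneg_left hy' (by norm_num)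
          _ = δ * Real.sqrt M := by ring
      calc a - b ≤ ‖F x y - F x' y'‖ := h1
        _ = ‖F (x - x') y + F x' (y - y')‖ := by rw [h2]
        _ ≤ ‖F (x - x') y‖ + ‖F x' (y - y')‖ := norm_add_le _ _
        _ ≤ δ * Real.sqrt M + δ * Real.sqrt M := add_le_add h3 h4
        _ = 2 * δ * Real.sqrt M := by ring
    have haM : a ≤ Real.sqrt M := hFle x y hx hy
    have hbM : b ≤ Real.sqrt M := hFle x' y' hx'u hy'u
    have hbT : b ^ 2 ≤ Mδ := by
      have hmem : ((star (kv x' y')) ⬝ᵥ (ρ *ᵥ (kv x' y'))).re ∈ T :=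
        ⟨x', hx'N, y', hy'N, rfl⟩
      have := le_csSup hTbdd hmem
      rwa [key] at this
    have hs : Real.sqrt M * Real.sqrt M = M := Real.mul_self_sqrt hM0
    have ha0 : 0 ≤ a := norm_nonneg _
    have hb0 : 0 ≤ b := norm_nonneg _
    have hs0 : 0 ≤ Real.sqrt M := Real.sqrt_nonneg _
    rw [key]
    have hab : a + b ≤ 2 * Real.sqrt M := by linarith
    have h₁ : (a - b) * (a + b) ≤ (2 * δ * Real.sqrt M) * (a + b) :=
      mul_le_mul_of_nonneg_right hdiff (by linarith)
    have h₂ : (2 * δ * Real.sqrt M) * (a + b) ≤ (2 * δ * Real.sqrt M) * (2 * Real.sqrt M) :=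
      mul_le_mul_of_nonneg_left hab (by positivity)
    have h₃ : (2 * δ * Real.sqrt M) * (2 * Real.sqrt M) = 4 * δ * M := by
      rw [show (2 * δ * Real.sqrt M) * (2 * Real.sqrt M) = 4 * δ * (Real.sqrt M * Real.sqrt M) by ring, hs]
    have h₄ : a ^ 2 - b ^ 2 = (a - b) * (a + b) := by ring
    linarith
  -- conclude
  have hTne : T.Nonempty := by
    obtain ⟨x', hx'N, _⟩ := hNnet _ he0
    exact ⟨_, x', hx'N, x', hx'N, rfl⟩
  have hMδ0 : Mδ + 4 * δ * M ≥ M := by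
    apply csSup_le hSne
    rintro r ⟨x, y, hx, hy, rfl⟩
    exact hstep x y hx hy
  have hMδM : Mδ ≤ M := csSup_le_csSup hSbdd hTne hTsubS
  show Mδ ≥ (1 - 4 * δ) * M
  nlinarith
end

section
/- The reduced state of the normalized antisymmetric projector α_{A^n} on (ℂ^d)^{⊗n} (n ≤ d) obtained by tracing out the last n − k subsystems equals the normalized antisymmetric projector α_{A^k} on (ℂ^d)^{⊗k}. -/
open Matrix

/-- The unitary permuting the tensor factors of (ℂ^d)^{⊗n} according to π,
as a matrix indexed by the product basis Fin n → Fin d. -/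
noncomputable def permMatrix (d n : ℕ) (π : Equiv.Perm (Fin n)) :
    Matrix (Fin n → Fin d) (Fin n → Fin d) ℂ :=
  fun f g => if f ∘ π = g then 1 else 0

/-- The orthogonal projector onto the antisymmetric subspace of (ℂ^d)^{⊗n}:
the antisymmetrizer (1/n!) ∑_π sgn(π) U_π. -/
noncomputable def antisymProj (d n : ℕ) : Matrix (Fin n → Fin d) (Fin n → Fin d) ℂ :=
  ((n.factorial : ℂ))⁻¹ •
    ∑ π : Equiv.Perm (Fin n), (((Equiv.Perm.sign π : ℤ) : ℂ)) • permMatrix d n π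

/-- The antisymmetric state α_{A^n}: the normalized projector onto the
antisymmetric subspace of (ℂ^d)^{⊗n}. -/
noncomputable def antisymState (d n : ℕ) : Matrix (Fin n → Fin d) (Fin n → Fin d) ℂ :=
  ((antisymProj d n).trace)⁻¹ • antisymProj d n

/-- The partial trace over the last m tensor factors of an operator on
(ℂ^d)^{⊗(k+m)}. -/
noncomputable def ptraceLast (d k m : ℕ)
    (M : Matrix (Fin (k + m) → Fin d) (Fin (k + m) → Fin d) ℂ) :
    Matrix (Fin k → Fin d) (Fin k → Fin d) ℂ :=
  fun f g => ∑ h : Fin m → Fin d, M (Fin.append f h) (Fin.append g h)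



/-- Signed sum over permutations matching `a ∘ π = b`. -/
noncomputable def sgnSum (d N : ℕ) (a b : Fin N → Fin d) : ℂ :=
  ∑ π : Equiv.Perm (Fin N), (((Equiv.Perm.sign π : ℤ) : ℂ)) * (if a ∘ π = b then 1 else 0)

lemma sgnSum_eq_det (d N : ℕ) (a b : Fin N → Fin d) :
    sgnSum d N a b = Matrix.det (Matrix.of fun x y => if a x = b y then (1:ℂ) else 0) := by
  rw [Matrix.det_apply, sgnSum]
  refine Finset.sum_congr rfl fun π _ => ?_
  have hp : (∏ i : Fin N, Matrix.of (fun x y => if a x = b y then (1:ℂ) else 0) (π i) i)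
      = ∏ i : Fin N, (if a (π i) = b i then (1:ℂ) else 0) := rfl
  rw [hp, Finset.prod_boole]
  have h2 : (∀ i ∈ Finset.univ, a (π i) = b i) ↔ a ∘ π = b := by
    simp [funext_iff, Function.comp]
  simp only [h2]
  simp [Units.smul_def, zsmul_eq_mul]

lemma sgnSum_eq_zero_of_not_inj {d N : ℕ} {a : Fin N → Fin d} (b : Fin N → Fin d)
    (ha : ¬ Function.Injective a) : sgnSum d N a b = 0 := by
  rw [sgnSum_eq_det]
  simp only [Function.Injective, not_forall] at ha
  obtain ⟨i, j, hij, hne⟩ := ha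
  exact Matrix.det_zero_of_row_eq hne (by funext y; simp [hij])

lemma sgnSum_eq_of_inj {d N : ℕ} {a b : Fin N → Fin d} (ha : Function.Injective a)
    (π₀ : Equiv.Perm (Fin N)) (h₀ : a ∘ π₀ = b) :
    sgnSum d N a b = ((Equiv.Perm.sign π₀ : ℤ) : ℂ) := by
  rw [sgnSum, Finset.sum_eq_single π₀]
  · simp [h₀]
  · intro π _ hπ
    have : ¬ a ∘ π = b := by
      intro hc
      apply hπ
      ext x
      exact congrArg Fin.val (ha (congrFun (hc.trans h₀.symm) x))
    simp [this]
  · simp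

lemma sgnSum_eq_zero_of_not_ex {d N : ℕ} {a b : Fin N → Fin d}
    (h : ¬ ∃ π : Equiv.Perm (Fin N), a ∘ π = b) : sgnSum d N a b = 0 := by
  rw [sgnSum]
  refine Finset.sum_eq_zero fun π _ => ?_
  have : ¬ a ∘ π = b := fun hc => h ⟨π, hc⟩
  simp [this]

/-- Embed a permutation of `Fin k` into `Fin (k+m)`, acting as identity on the last block. -/
noncomputable def embedPerm (k m : ℕ) (σ : Equiv.Perm (Fin k)) : Equiv.Perm (Fin (k+m)) :=
  (finSumFinEquiv.permCongr) (σ.sumCongr (Equiv.refl (Fin m)))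

lemma embedPerm_castAdd (k m : ℕ) (σ : Equiv.Perm (Fin k)) (i : Fin k) :
    embedPerm k m σ (Fin.castAdd m i) = Fin.castAdd m (σ i) := by
  simp [embedPerm, Equiv.permCongr_apply]

lemma embedPerm_natAdd (k m : ℕ) (σ : Equiv.Perm (Fin k)) (j : Fin m) :
    embedPerm k m σ (Fin.natAdd k j) = Fin.natAdd k j := by
  simp [embedPerm, Equiv.permCongr_apply]

lemma sign_embedPerm (k m : ℕ) (σ : Equiv.Perm (Fin k)) :
    Equiv.Perm.sign (embedPerm k m σ) = Equiv.Perm.sign σ := by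
  rw [embedPerm, Equiv.Perm.sign_permCongr, Equiv.Perm.sign_sumCongr]
  simp

lemma append_comp_embedPerm {d k m : ℕ} (f : Fin k → Fin d) (h : Fin m → Fin d)
    (σ : Equiv.Perm (Fin k)) :
    Fin.append f h ∘ (embedPerm k m σ) = Fin.append (f ∘ σ) h := by
  funext x
  induction x using Fin.addCases with
  | left i => simp [embedPerm_castAdd, Fin.append_left]
  | right j => simp [embedPerm_natAdd, Fin.append_right]

lemma exists_sigma_of_pi {d k m : ℕ} {f g : Fin k → Fin d} {h : Fin m → Fin d}
    (hinj : Function.Injective (Fin.append f h))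
    (π : Equiv.Perm (Fin (k+m))) (hπ : Fin.append f h ∘ π = Fin.append g h) :
    ∃ σ : Equiv.Perm (Fin k), f ∘ σ = g := by
  have hπ' : ∀ x, Fin.append f h (π x) = Fin.append g h x := congrFun hπ
  -- π fixes the second block
  have hfix : ∀ j : Fin m, π (Fin.natAdd k j) = Fin.natAdd k j := by
    intro j
    apply hinj
    rw [hπ' (Fin.natAdd k j), Fin.append_right, Fin.append_right]
  -- π maps the first block into the first block
  have hlt : ∀ i : Fin k, (π (Fin.castAdd m i)).val < k := by
    intro i
    by_contra hge
    push_neg at hge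
    have hj : π (Fin.castAdd m i) = Fin.natAdd k ⟨(π (Fin.castAdd m i)).val - k, by omega⟩ := by
      apply Fin.ext; simp [Fin.natAdd]; omega
    have heq : π (Fin.castAdd m i) = π (Fin.natAdd k ⟨(π (Fin.castAdd m i)).val - k, by omega⟩) := by
      rw [hfix]; exact hj
    have := π.injective heq
    have hv := congrArg Fin.val this
    simp [Fin.castAdd, Fin.natAdd] at hv
    omega
  -- define σ₀
  set σ₀ : Fin k → Fin k := fun i => ⟨(π (Fin.castAdd m i)).val, hlt i⟩ with hσ₀
  have hcast : ∀ i, Fin.castAdd m (σ₀ i) = π (Fin.castAdd m i) := by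
    intro i; apply Fin.ext; simp [Fin.castAdd, hσ₀]
  have hσinj : Function.Injective σ₀ := by
    intro i i' hii
    have : π (Fin.castAdd m i) = π (Fin.castAdd m i') := by
      rw [← hcast, ← hcast, hii]
    exact Fin.castAdd_injective k m (π.injective this)
  have hσbij : Function.Bijective σ₀ := Finite.injective_iff_bijective.mp hσinj
  refine ⟨Equiv.ofBijective σ₀ hσbij, funext fun i => ?_⟩
  have : f (σ₀ i) = Fin.append f h (Fin.castAdd m (σ₀ i)) := (Fin.append_left f h _).symm
  show f (σ₀ i) = g i
  rw [this, hcast, hπ', Fin.append_left]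

lemma sgnSum_append {d k m : ℕ} {f g : Fin k → Fin d} {h : Fin m → Fin d}
    (hinj : Function.Injective (Fin.append f h)) :
    sgnSum d (k+m) (Fin.append f h) (Fin.append g h) = sgnSum d k f g := by
  have hf : Function.Injective f := by
    intro i i' hii
    have : Fin.append f h (Fin.castAdd m i) = Fin.append f h (Fin.castAdd m i') := by
      rw [Fin.append_left, Fin.append_left, hii]
    exact Fin.castAdd_injective k m (hinj this)
  by_cases hex : ∃ σ : Equiv.Perm (Fin k), f ∘ σ = g
  · obtain ⟨σ, hσ⟩ := hex
    rw [sgnSum_eq_of_inj hf σ hσ,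
        sgnSum_eq_of_inj hinj (embedPerm k m σ) (by rw [append_comp_embedPerm, hσ]),
        sign_embedPerm]
  · rw [sgnSum_eq_zero_of_not_ex hex, sgnSum_eq_zero_of_not_ex]
    intro ⟨π, hπ⟩
    exact hex (exists_sigma_of_pi hinj π hπ)

lemma append_inj_iff {d k m : ℕ} {f : Fin k → Fin d} (hf : Function.Injective f)
    (h : Fin m → Fin d) :
    Function.Injective (Fin.append f h) ↔
      (Function.Injective h ∧ ∀ j, h j ∉ Set.range f) := by
  constructor
  · intro hinj
    constructor
    · intro j j' hjj
      have : Fin.append f h (Fin.natAdd k j) = Fin.append f h (Fin.natAdd k j') := by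
        rw [Fin.append_right, Fin.append_right, hjj]
      have := congrArg Fin.val (hinj this)
      simp [Fin.natAdd] at this
      exact Fin.ext this
    · rintro j ⟨i, hi⟩
      have : Fin.append f h (Fin.castAdd m i) = Fin.append f h (Fin.natAdd k j) := by
        rw [Fin.append_left, Fin.append_right, hi]
      have := congrArg Fin.val (hinj this)
      simp [Fin.natAdd, Fin.castAdd, Fin.castLE] at this
      omega
  · rintro ⟨hh, hr⟩ x y hxy
    induction x using Fin.addCases with
    | left i =>
      induction y using Fin.addCases with
      | left i' =>
        rw [Fin.append_left, Fin.append_left] at hxy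
        rw [hf hxy]
      | right j' =>
        rw [Fin.append_left, Fin.append_right] at hxy
        exact absurd ⟨i, hxy⟩ (hr j')
    | right j =>
      induction y using Fin.addCases with
      | left i' =>
        rw [Fin.append_right, Fin.append_left] at hxy
        exact absurd ⟨i', hxy.symm⟩ (hr j)
      | right j' =>
        rw [Fin.append_right, Fin.append_right] at hxy
        rw [hh hxy]

lemma card_append_inj {d k m : ℕ} {f : Fin k → Fin d} (hf : Function.Injective f) :
    Fintype.card {h : Fin m → Fin d // Function.Injective (Fin.append f h)}
      = (d - k).descFactorial m := by
  have e : {h : Fin m → Fin d // Function.Injective (Fin.append f h)}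
      ≃ (Fin m ↪ {x : Fin d // x ∉ Set.range f}) :=
    { toFun := fun p =>
        ⟨fun j => ⟨p.1 j, ((append_inj_iff hf p.1).mp p.2).2 j⟩,
         fun j j' hjj => ((append_inj_iff hf p.1).mp p.2).1 (congrArg Subtype.val hjj)⟩
      invFun := fun e =>
        ⟨fun j => (e j).1, (append_inj_iff hf _).mpr
          ⟨fun j j' hjj => e.injective (Subtype.ext hjj), fun j => (e j).2⟩⟩
      left_inv := fun p => Subtype.ext rfl
      right_inv := fun e => by ext j : 2; rfl }
  rw [Fintype.card_congr e, Fintype.card_embedding_eq, Fintype.card_fin]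
  congr 1
  have : Fintype.card {x : Fin d // x ∈ Set.range f} = k := by
    rw [Fintype.card_congr (Equiv.ofInjective f hf).symm, Fintype.card_fin]
  rw [Fintype.card_subtype_compl, this, Fintype.card_fin]

lemma sum_sgnSum {d k m : ℕ} (f g : Fin k → Fin d) :
    ∑ h : Fin m → Fin d, sgnSum d (k+m) (Fin.append f h) (Fin.append g h)
      = (((d - k).descFactorial m : ℕ) : ℂ) * sgnSum d k f g := by
  classical
  by_cases hf : Function.Injective f
  · have key : ∀ h : Fin m → Fin d,
        sgnSum d (k+m) (Fin.append f h) (Fin.append g h)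
          = if Function.Injective (Fin.append f h) then sgnSum d k f g else 0 := by
      intro h
      by_cases hi : Function.Injective (Fin.append f h)
      · rw [if_pos hi, sgnSum_append hi]
      · rw [if_neg hi, sgnSum_eq_zero_of_not_inj _ hi]
    simp_rw [key]
    rw [← Finset.sum_filter, Finset.sum_const, nsmul_eq_mul]
    congr 2
    rw [← Fintype.card_subtype, card_append_inj hf]
  · have hz : sgnSum d k f g = 0 := sgnSum_eq_zero_of_not_inj _ hf
    rw [hz, mul_zero]
    refine Finset.sum_eq_zero fun h _ => ?_
    apply sgnSum_eq_zero_of_not_inj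
    intro hc
    apply hf
    intro i i' hii
    have : Fin.append f h (Fin.castAdd m i) = Fin.append f h (Fin.castAdd m i') := by
      rw [Fin.append_left, Fin.append_left, hii]
    exact Fin.castAdd_injective k m (hc this)

lemma antisymProj_apply (d n : ℕ) (a b : Fin n → Fin d) :
    antisymProj d n a b = ((n.factorial : ℂ))⁻¹ * sgnSum d n a b := by
  simp [antisymProj, sgnSum, permMatrix, Matrix.sum_apply, Finset.mul_sum]

lemma sgnSum_diag (d n : ℕ) (a : Fin n → Fin d) :
    sgnSum d n a a = if Function.Injective a then 1 else 0 := by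
  classical
  by_cases ha : Function.Injective a
  · rw [if_pos ha, sgnSum_eq_of_inj ha 1 (by simp)]
    simp
  · rw [if_neg ha, sgnSum_eq_zero_of_not_inj _ ha]

lemma trace_antisymProj (d n : ℕ) :
    (antisymProj d n).trace = ((d.descFactorial n : ℕ) : ℂ) / (n.factorial : ℂ) := by
  classical
  rw [Matrix.trace]
  have : ∀ a : Fin n → Fin d, (antisymProj d n).diag a
      = ((n.factorial : ℂ))⁻¹ * (if Function.Injective a then 1 else 0) := by
    intro a
    rw [Matrix.diag_apply, antisymProj_apply, sgnSum_diag]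
  simp_rw [this]
  rw [← Finset.mul_sum, ← Finset.sum_filter, Finset.sum_const, nsmul_eq_mul, mul_one]
  rw [← Fintype.card_subtype]
  rw [Fintype.card_congr (Equiv.subtypeInjectiveEquivEmbedding (Fin n) (Fin d)),
    Fintype.card_embedding_eq, Fintype.card_fin, Fintype.card_fin]
  ring

lemma descFactorial_mul (d k m : ℕ) :
    d.descFactorial (k + m) = d.descFactorial k * (d - k).descFactorial m := by
  induction m with
  | zero => simp
  | succ m ih =>
    rw [show k + (m+1) = (k+m) + 1 from rfl, Nat.descFactorial_succ,
      Nat.descFactorial_succ, ih]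
    have : d - (k + m) = d - k - m := by omega
    rw [this]; ring

/-- Tracing out the last m subsystems of the antisymmetric state on (ℂ^d)^{⊗(k+m)}
(with k + m ≤ d) yields the antisymmetric state on (ℂ^d)^{⊗k}. -/
theorem ptrace_antisymState (d k m : ℕ) (h : k + m ≤ d) :
    ptraceLast d k m (antisymState d (k + m)) = antisymState d k := by
  have hkd : k ≤ d := le_trans (Nat.le_add_right k m) h
  have hn0 : (((d.descFactorial (k+m) : ℕ)) : ℂ) ≠ 0 := by
    have h1 : d.descFactorial (k+m) ≠ 0 := by
      intro hc; have := Nat.descFactorial_eq_zero_iff_lt.mp hc; omega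
    exact_mod_cast h1
  have hk0 : (((d.descFactorial k : ℕ)) : ℂ) ≠ 0 := by
    have h1 : d.descFactorial k ≠ 0 := by
      intro hc; have := Nat.descFactorial_eq_zero_iff_lt.mp hc; omega
    exact_mod_cast h1
  have hfn : ((Nat.factorial (k+m) : ℕ) : ℂ) ≠ 0 := by
    exact_mod_cast Nat.factorial_ne_zero (k+m)
  have hfk : ((Nat.factorial k : ℕ) : ℂ) ≠ 0 := by
    exact_mod_cast Nat.factorial_ne_zero k
  funext f g
  have lhs : ptraceLast d k m (antisymState d (k + m)) f g
      = ((antisymProj d (k+m)).trace)⁻¹ * ((Nat.factorial (k+m) : ℂ))⁻¹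
        * ((((d - k).descFactorial m : ℕ) : ℂ) * sgnSum d k f g) := by
    rw [ptraceLast, ← sum_sgnSum f g, Finset.mul_sum]
    refine Finset.sum_congr rfl fun x _ => ?_
    rw [antisymState, Matrix.smul_apply, antisymProj_apply, smul_eq_mul]
    ring
  rw [lhs, trace_antisymProj]
  rw [antisymState, Matrix.smul_apply, antisymProj_apply, smul_eq_mul, trace_antisymProj]
  have hmul : ((d.descFactorial (k+m) : ℕ) : ℂ)
      = ((d.descFactorial k : ℕ) : ℂ) * (((d - k).descFactorial m : ℕ) : ℂ) := by
    rw [← Nat.cast_mul, ← descFactorial_mul]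
  field_simp
  rw [hmul]
  ring
end

section
/- For a pure tripartite state ψ on H_A ⊗ H_B ⊗ H_C with reduced states ρ_AB, ρ_AC, suppose E_F(ψ_{A:BC}) = E_F(ρ_{A:B}) + G(ρ_{AC}) holds for a nonnegative, jointly convex functional G with G(ρ_AC) ≥ E(ρ_{A:C}) for some convex E vanishing only appropriately. Then for any mixed state ρ_ABC, convexity of E_F and joint convexity of G imply E_F(ρ_{A:BC}) ≥ E_F(ρ_{A:B}) + E(ρ_{A:C}) where the infimum over pure-state decompositions achieving E_F(ρ_{A:BC}) is used. -/
/-- Abstract convex-roof argument (Koashi–Winter chaining): suppose the tripartite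
state ρ decomposes as ρ = ∑ᵢ pᵢ ψᵢ into pure states achieving the convex roof,
E_F(ρ_{A:BC}) = ∑ᵢ pᵢ E_F(ψᵢ), and for each pure ψᵢ the identity
E_F(ψᵢ) = E_F(mAB ψᵢ) + S_M(mAC ψᵢ ‖ τᵢ) holds with τᵢ = ρᵢ_A ⊗ ρᵢ_C separable.
If E_F is convex, S_M is jointly convex and nonnegative on separable second
arguments, and the separable set is convex (∑ᵢ pᵢ τᵢ separable), then
E_F(ρ_{A:BC}) ≥ E_F(ρ_{A:B}) + E_{R,M}(ρ_{A:C}), where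
E_{R,M}(η) = inf { S_M(η ‖ σ) : σ separable }. -/
theorem convex_roof_monogamy
    {V W X : Type*} [AddCommGroup V] [Module ℝ V]
    [AddCommGroup W] [Module ℝ W] [AddCommGroup X] [Module ℝ X]
    (mAB : V →ₗ[ℝ] W) (mAC : V →ₗ[ℝ] X)
    (EFtri : V → ℝ) (EF : W → ℝ) (SM : X → X → ℝ)
    (Sep : Set X)
    (N : ℕ) (p : Fin N → ℝ) (ψ : Fin N → V) (τ : Fin N → X)
    (ρ : V)
    (hp : ∀ i, 0 ≤ p i) (hp1 : ∑ i, p i = 1)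
    (hρ : ρ = ∑ i, p i • ψ i)
    -- the decomposition achieves the convex roof E_F(ρ_{A:BC})
    (hroof : EFtri ρ = ∑ i, p i * EFtri (ψ i))
    -- Koashi–Winter identity on each pure state, with τᵢ = ρᵢ_A ⊗ ρᵢ_C
    (hKW : ∀ i, EFtri (ψ i) = EF (mAB (ψ i)) + SM (mAC (ψ i)) (τ i))
    (hτ : ∀ i, τ i ∈ Sep)
    -- the separable set is convex
    (hSepConv : (∑ i, p i • τ i) ∈ Sep)
    -- convexity of E_F
    (hEFconv : ∀ (x : Fin N → W), EF (∑ i, p i • x i) ≤ ∑ i, p i * EF (x i))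
    -- joint convexity of S_M
    (hSMconv : ∀ (x y : Fin N → X),
      SM (∑ i, p i • x i) (∑ i, p i • y i) ≤ ∑ i, p i * SM (x i) (y i))
    -- nonnegativity of S_M against separable states (so the infimum exists)
    (hSM0 : ∀ σ ∈ Sep, 0 ≤ SM (mAC ρ) σ) :
    EFtri ρ ≥ EF (mAB ρ) + sInf { r | ∃ σ ∈ Sep, r = SM (mAC ρ) σ } := by
  have hmapAB : mAB ρ = ∑ i, p i • mAB (ψ i) := by
    rw [hρ, map_sum]; simp [map_smul]
  have hmapAC : mAC ρ = ∑ i, p i • mAC (ψ i) := by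
    rw [hρ, map_sum]; simp [map_smul]
  have h1 : EFtri ρ = ∑ i, p i * EF (mAB (ψ i)) + ∑ i, p i * SM (mAC (ψ i)) (τ i) := by
    rw [hroof, ← Finset.sum_add_distrib]
    congr 1; ext i; rw [hKW i]; ring
  have h2 : EF (mAB ρ) ≤ ∑ i, p i * EF (mAB (ψ i)) := by
    rw [hmapAB]; exact hEFconv _
  have h3 : SM (mAC ρ) (∑ i, p i • τ i) ≤ ∑ i, p i * SM (mAC (ψ i)) (τ i) := by
    rw [hmapAC]; exact hSMconv _ _
  have hmem : SM (mAC ρ) (∑ i, p i • τ i) ∈ { r | ∃ σ ∈ Sep, r = SM (mAC ρ) σ } :=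
    ⟨_, hSepConv, rfl⟩
  have h4 : sInf { r | ∃ σ ∈ Sep, r = SM (mAC ρ) σ } ≤ SM (mAC ρ) (∑ i, p i • τ i) :=
    csInf_le ⟨0, fun r ⟨σ, hσ, hr⟩ => hr ▸ hSM0 σ hσ⟩ hmem
  linarith
end
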